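/- With the Saguaro sampling scheme p_C as above and a fixed target distribution q, define the residual mass u_C(t) := max(q(t) - p_C(t), 0), in(C) := Σ_{t∈S} u_C(t), out(C) := Σ_{t∉S} u_C(t), and p_hit(C) := in(C)/(in(C) + out(C)) (equal to 1 if the denominator is 0). Then p_hit(C) is nonincreasing in C on C > 0. -/
import Mathlib


/-- the cache hit rate of the Saguaro sampling scheme is
    nonincreasing in the downweighting constant C. -/
theorem saguaro_phit_antitone {V : Type*} [Fintype V] [DecidableEq V]
    (z : V → ℝ) (S : Finset V) (q : V → ℝ)
    (hq0 : ∀ t, 0 ≤ q t) (hq1 : ∑ t, q t = 1)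
    (w : V → ℝ) (hw : ∀ t, w t = Real.exp (z t))
    (Z : ℝ → ℝ) (hZ : ∀ C, Z C = C * ∑ t ∈ S, w t + ∑ t ∈ Sᶜ, w t)
    (p : ℝ → V → ℝ)
    (hp : ∀ C t, p C t = if t ∈ S then C * w t / Z C else w t / Z C)
    (hS : S.Nonempty) (hSc : (Sᶜ : Finset V).Nonempty)
    (u : ℝ → V → ℝ) (hu : ∀ C t, u C t = max (q t - p C t) 0)
    (inn out phit : ℝ → ℝ)
    (hin : ∀ C, inn C = ∑ t ∈ S, u C t)
    (hout : ∀ C, out C = ∑ t ∈ Sᶜ, u C t)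
    (hphit : ∀ C, phit C =
      if inn C + out C = 0 then 1 else inn C / (inn C + out C)) :
    ∀ C C' : ℝ, 0 < C → C ≤ C' → phit C' ≤ phit C := by
  intro C C' hC hCC'
  have hC' : 0 < C' := lt_of_lt_of_le hC hCC'
  have hwpos : ∀ t, 0 < w t := fun t => by rw [hw]; exact Real.exp_pos _
  have hA : 0 < ∑ t ∈ S, w t :=
    Finset.sum_pos (fun t _ => hwpos t) hS
  have hB : 0 < ∑ t ∈ Sᶜ, w t :=
    Finset.sum_pos (fun t _ => hwpos t) hSc
  have hZC : 0 < Z C := by rw [hZ]; positivity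
  have hZC' : 0 < Z C' := by rw [hZ]; positivity
  -- p monotone on S (increasing), on Sᶜ (decreasing)
  have huS : ∀ t ∈ S, u C' t ≤ u C t := by
    intro t ht
    have hpt : p C t ≤ p C' t := by
      rw [hp, hp, if_pos ht, if_pos ht]
      rw [div_le_div_iff₀ hZC hZC']
      have h1 : Z C = C * ∑ s ∈ S, w s + ∑ s ∈ Sᶜ, w s := hZ C
      have h2 : Z C' = C' * ∑ s ∈ S, w s + ∑ s ∈ Sᶜ, w s := hZ C'
      rw [h1, h2]
      nlinarith [mul_nonneg (mul_nonneg (sub_nonneg.mpr hCC') (hwpos t).le) hB.le]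
    rw [hu, hu]
    exact max_le_max (by linarith) le_rfl
  have huSc : ∀ t ∈ Sᶜ, u C t ≤ u C' t := by
    intro t ht
    have hpt : p C' t ≤ p C t := by
      have ht' : t ∉ S := Finset.mem_compl.mp ht
      rw [hp, hp, if_neg ht', if_neg ht']
      apply div_le_div_of_nonneg_left (hwpos t).le hZC
      rw [hZ, hZ]; nlinarith [hA]
    rw [hu, hu]
    exact max_le_max (by linarith) le_rfl
  have hinn : inn C' ≤ inn C := by
    rw [hin, hin]; exact Finset.sum_le_sum huS
  have houtm : out C ≤ out C' := by
    rw [hout, hout]; exact Finset.sum_le_sum huSc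
  have hu0 : ∀ D t, 0 ≤ u D t := fun D t => by rw [hu]; exact le_max_right _ _
  have hinn0 : ∀ D, 0 ≤ inn D := fun D => by
    rw [hin]; exact Finset.sum_nonneg fun t _ => hu0 D t
  have hout0 : ∀ D, 0 ≤ out D := fun D => by
    rw [hout]; exact Finset.sum_nonneg fun t _ => hu0 D t
  rw [hphit, hphit]
  by_cases h' : inn C' + out C' = 0
  · rw [if_pos h']
    have houtC : out C = 0 := le_antisymm (by nlinarith [hout0 C', hinn0 C']) (hout0 C)
    by_cases h : inn C + out C = 0
    · rw [if_pos h]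
    · rw [if_neg h]
      have hpos : 0 < inn C + out C :=
        lt_of_le_of_ne (by linarith [hinn0 C, hout0 C]) (Ne.symm h)
      rw [houtC, add_zero] at hpos ⊢
      rw [div_self (ne_of_gt hpos)]
  · rw [if_neg h']
    have hpos' : 0 < inn C' + out C' :=
      lt_of_le_of_ne (by linarith [hinn0 C', hout0 C']) (Ne.symm h')
    by_cases h : inn C + out C = 0
    · rw [if_pos h]
      have hinnC : inn C = 0 := le_antisymm (by nlinarith [hinn0 C, hout0 C]) (hinn0 C)
      have : inn C' = 0 := le_antisymm (hinnC ▸ hinn) (hinn0 C')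
      rw [this]; simp
    · rw [if_neg h]
      have hpos : 0 < inn C + out C :=
        lt_of_le_of_ne (by linarith [hinn0 C, hout0 C]) (Ne.symm h)
      rw [div_le_div_iff₀ hpos' hpos]
      nlinarith [hinn0 C', hout0 C, hinn, houtm]
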